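/- Let V be a Euclidean d-space, a ∈ (1/(d+1), 1/d), and let ν be a nice probability measure on V with sup_x depth_ν(x) < a. Then ν has a unique Tukey median, i.e., there is at most one point o with depth_ν(o) = sup_x depth_ν(x). -/

import Mathlib

open MeasureTheory Set Filter
set_option maxHeartbeats 1000000

/-- The half-space (Tukey) depth of a point. -/
noncomputable def depthPt {W : Type*} [NormedAddCommGroup W] [InnerProductSpace ℝ W]
    [MeasurableSpace W] (ν : Measure W) (x : W) : ℝ :=
  sInf {r : ℝ | ∃ (m : W) (c : ℝ), m ≠ 0 ∧ (inner ℝ m x : ℝ) ≤ c ∧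
    r = (ν {y : W | (inner ℝ m y : ℝ) ≤ c}).toReal}

variable {d : ℕ}
local notation "V" => EuclideanSpace ℝ (Fin d)

def halfSp (m : EuclideanSpace ℝ (Fin d)) (c : ℝ) : Set (EuclideanSpace ℝ (Fin d)) :=
  {y | (inner ℝ m y : ℝ) ≤ c}

lemma halfSp_closed (m : V) (c : ℝ) : IsClosed (halfSp m c) :=
  isClosed_le (Continuous.inner continuous_const continuous_id) continuous_const

lemma halfSp_meas (m : V) (c : ℝ) : MeasurableSet (halfSp m c) :=
  (halfSp_closed m c).measurableSet

lemma hyperplane_null (m : V) (c : ℝ) (hm : m ≠ 0) :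
    volume {y : V | (inner ℝ m y : ℝ) = c} = 0 := by
  have hker : LinearMap.ker (innerSL ℝ m : V →L[ℝ] ℝ).toLinearMap ≠ ⊤ := by
    intro h
    have : m ∈ LinearMap.ker (innerSL ℝ m).toLinearMap := h ▸ Submodule.mem_top
    simp only [LinearMap.mem_ker, ContinuousLinearMap.coe_coe, innerSL_apply_apply] at this
    exact hm (inner_self_eq_zero.mp this)
  have h0 : volume (LinearMap.ker (innerSL ℝ m : V →L[ℝ] ℝ).toLinearMap : Set V) = 0 :=
    Measure.addHaar_submodule volume _ hker
  set y₀ : V := (c / (‖m‖^2)) • m with hy₀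
  have hmy₀ : (inner ℝ m y₀ : ℝ) = c := by
    rw [hy₀, real_inner_smul_right, real_inner_self_eq_norm_sq]
    field_simp [norm_ne_zero_iff.mpr hm]
  have hset : {y : V | (inner ℝ m y : ℝ) = c} =
      (fun y => y + (-y₀)) ⁻¹' (LinearMap.ker (innerSL ℝ m : V →L[ℝ] ℝ).toLinearMap : Set V) := by
    ext y
    simp only [Set.mem_setOf_eq, Set.mem_preimage, SetLike.mem_coe, LinearMap.mem_ker,
      ContinuousLinearMap.coe_coe, innerSL_apply_apply, inner_add_right, inner_neg_right, hmy₀]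
    constructor <;> intro h <;> linarith
  rw [hset, measure_preimage_add_right]
  exact h0

section
variable {ν : Measure (EuclideanSpace ℝ (Fin d))} {f : EuclideanSpace ℝ (Fin d) → ℝ}
  [IsProbabilityMeasure ν]

lemma nu_apply (hν : ν = volume.withDensity fun x => ENNReal.ofReal (f x))
    (s : Set V) (hs : MeasurableSet s) : ν s = ∫⁻ y in s, ENNReal.ofReal (f y) := by
  rw [hν, withDensity_apply _ hs]

lemma f_integrable (hf : Continuous f) (hfpos : ∀ x, 0 < f x)
    (hν : ν = volume.withDensity fun x => ENNReal.ofReal (f x)) :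
    Integrable f (volume : Measure (EuclideanSpace ℝ (Fin d))) := by
  refine ⟨hf.aestronglyMeasurable, ?_⟩
  rw [hasFiniteIntegral_iff_norm]
  have heq : ∀ y : V, ENNReal.ofReal ‖f y‖ = ENNReal.ofReal (f y) := fun y => by
    rw [Real.norm_of_nonneg (hfpos y).le]
  simp only [heq]
  have h1 : ∫⁻ y, ENNReal.ofReal (f y) ∂(volume : Measure V) = ν Set.univ := by
    rw [nu_apply hν _ MeasurableSet.univ, Measure.restrict_univ]
  rw [h1, measure_univ]
  exact ENNReal.one_lt_top

lemma G_eq (hf : Continuous f) (hfpos : ∀ x, 0 < f x)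
    (hν : ν = volume.withDensity fun x => ENNReal.ofReal (f x)) (m : V) (c : ℝ) :
    (ν (halfSp m c)).toReal = ∫ y in halfSp m c, f y := by
  rw [nu_apply hν _ (halfSp_meas m c),
    integral_eq_lintegral_of_nonneg_ae (Eventually.of_forall fun y => (hfpos y).le)
      hf.aestronglyMeasurable.restrict]

lemma G_tendsto (hf : Continuous f) (hfpos : ∀ x, 0 < f x)
    (hν : ν = volume.withDensity fun x => ENNReal.ofReal (f x))
    {m : V} (hm : m ≠ 0) {c : ℝ} {mn : ℕ → V} {cn : ℕ → ℝ}
    (hmn : Tendsto mn atTop (nhds m)) (hcn : Tendsto cn atTop (nhds c)) :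
    Tendsto (fun n => ∫ y in halfSp (mn n) (cn n), f y) atTop
      (nhds (∫ y in halfSp m c, f y)) := by
  have key := tendsto_integral_of_dominated_convergence (μ := (volume : Measure V))
    (F := fun n => (halfSp (mn n) (cn n)).indicator f) (f := (halfSp m c).indicator f)
    (bound := f)
    (fun n => hf.aestronglyMeasurable.indicator (halfSp_meas _ _))
    (f_integrable hf hfpos hν)
    (fun n => Eventually.of_forall fun y => by
      calc ‖(halfSp (mn n) (cn n)).indicator f y‖ ≤ ‖f y‖ := norm_indicator_le_norm_self f y
      _ = f y := Real.norm_of_nonneg (hfpos y).le)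
    ?_
  · simpa only [integral_indicator (halfSp_meas _ _)] using key
  · have hae : ∀ᵐ y ∂(volume : Measure V), (inner ℝ m y : ℝ) ≠ c := by
      rw [ae_iff]
      simpa using hyperplane_null m c hm
    filter_upwards [hae] with y hy
    have hinner : Tendsto (fun n => (inner ℝ (mn n) y : ℝ)) atTop (nhds (inner ℝ m y : ℝ)) :=
      Tendsto.inner hmn tendsto_const_nhds
    rcases lt_or_gt_of_ne hy with h | h
    · -- eventually in the half-space
      have hev : ∀ᶠ n in atTop, (inner ℝ (mn n) y : ℝ) < cn n := by
        have := (hcn.sub hinner).eventually (eventually_gt_nhds (show (0:ℝ) < c - inner ℝ m y by linarith))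
        filter_upwards [this] with n hn
        linarith
      have : ∀ᶠ n in atTop, (halfSp (mn n) (cn n)).indicator f y = f y := by
        filter_upwards [hev] with n hn
        have hmem : y ∈ halfSp (mn n) (cn n) := le_of_lt hn
        exact Set.indicator_of_mem hmem f
      have hmem : y ∈ halfSp m c := le_of_lt h
      rw [Set.indicator_of_mem hmem f]
      exact Tendsto.congr' (this.mono fun n hn => hn.symm) tendsto_const_nhds
    · have hev : ∀ᶠ n in atTop, ¬ ((inner ℝ (mn n) y : ℝ) ≤ cn n) := by
        have := (hinner.sub hcn).eventually (eventually_gt_nhds (show (0:ℝ) < inner ℝ m y - c by linarith))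
        filter_upwards [this] with n hn
        intro hcon; linarith
      have : ∀ᶠ n in atTop, (halfSp (mn n) (cn n)).indicator f y = 0 := by
        filter_upwards [hev] with n hn
        have hmem : y ∉ halfSp (mn n) (cn n) := hn
        exact Set.indicator_of_notMem hmem f
      have hmem : y ∉ halfSp m c := not_le.mpr h
      rw [Set.indicator_of_notMem hmem f]
      exact Tendsto.congr' (this.mono fun n hn => hn.symm) tendsto_const_nhds

lemma G_contOn (hf : Continuous f) (hfpos : ∀ x, 0 < f x)
    (hν : ν = volume.withDensity fun x => ENNReal.ofReal (f x)) :
    ContinuousOn (fun p : (EuclideanSpace ℝ (Fin d)) × ℝ => ∫ y in halfSp p.1 p.2, f y)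
      {p : (EuclideanSpace ℝ (Fin d)) × ℝ | p.1 ≠ 0} := by
  intro p hp
  apply ContinuousAt.continuousWithinAt
  rw [ContinuousAt]
  apply Filter.tendsto_iff_seq_tendsto.mpr
  intro u hu
  have h1 : Tendsto (fun n => (u n).1) atTop (nhds p.1) := (continuous_fst.tendsto p).comp hu
  have h2 : Tendsto (fun n => (u n).2) atTop (nhds p.2) := (continuous_snd.tendsto p).comp hu
  exact G_tendsto hf hfpos hν hp h1 h2

lemma G_strictMono (hf : Continuous f) (hfpos : ∀ x, 0 < f x)
    (hν : ν = volume.withDensity fun x => ENNReal.ofReal (f x))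
    {m : V} (hm : m ≠ 0) {c c' : ℝ} (hcc : c < c') :
    (ν (halfSp m c)).toReal < (ν (halfSp m c')).toReal := by
  set O : Set V := {y | c < (inner ℝ m y : ℝ)} ∩ {y | (inner ℝ m y : ℝ) < c'} with hO
  have hOopen : IsOpen O :=
    (isOpen_lt continuous_const (Continuous.inner continuous_const continuous_id)).inter
      (isOpen_lt (Continuous.inner continuous_const continuous_id) continuous_const)
  have hOne : O.Nonempty := by
    have hval : (inner ℝ m ((((c+c')/2) / ‖m‖^2) • m) : ℝ) = (c+c')/2 := by
      rw [real_inner_smul_right, real_inner_self_eq_norm_sq]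
      have : ‖m‖ ^ 2 ≠ 0 := pow_ne_zero _ (norm_ne_zero_iff.mpr hm)
      rw [div_mul_cancel₀ _ this]
    refine ⟨(((c+c')/2) / ‖m‖^2) • m, ?_, ?_⟩ <;>
      simp only [Set.mem_setOf_eq, hval] <;> linarith
  have hvolO : 0 < volume O := hOopen.measure_pos volume hOne
  have hνO : 0 < ν O := by
    rcases (pos_iff_ne_zero.mp hvolO : volume O ≠ 0) with _
    rw [nu_apply hν O hOopen.measurableSet]
    by_contra hz
    push_neg at hz
    have hz0 : ∫⁻ y in O, ENNReal.ofReal (f y) = 0 := le_antisymm hz zero_le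
    rw [lintegral_eq_zero_iff (Measurable.ennreal_ofReal hf.measurable)] at hz0
    rw [EventuallyEq, ae_restrict_iff' hOopen.measurableSet] at hz0
    have : ∀ᵐ y ∂(volume : Measure V), y ∉ O := by
      filter_upwards [hz0] with y hy
      intro hyO
      have := hy hyO
      simp only [Pi.zero_apply, ENNReal.ofReal_eq_zero] at this
      exact absurd this (not_le.mpr (hfpos y))
    rw [ae_iff] at this
    simp only [not_not] at this
    exact absurd this (pos_iff_ne_zero.mp hvolO)
  have hsub : halfSp m c ∪ O ⊆ halfSp m c' := by
    rintro y (hy | hy)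
    · exact le_trans hy hcc.le
    · have : (inner ℝ m y : ℝ) < c' := hy.2
      exact le_of_lt this
  have hdisj : Disjoint (halfSp m c) O := by
    rw [Set.disjoint_left]
    intro y hy hyO
    have h1 : c < (inner ℝ m y : ℝ) := hyO.1
    have h2 : (inner ℝ m y : ℝ) ≤ c := hy
    linarith
  have hlt : ν (halfSp m c) < ν (halfSp m c') := by
    calc ν (halfSp m c) < ν (halfSp m c) + ν O :=
          ENNReal.lt_add_right (measure_ne_top ν _) (pos_iff_ne_zero.mp hνO)
    _ = ν (halfSp m c ∪ O) := (measure_union hdisj hOopen.measurableSet).symm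
    _ ≤ ν (halfSp m c') := measure_mono hsub
  exact ENNReal.toReal_strict_mono (measure_ne_top ν _) hlt

lemma G_mono (m : V) {c c' : ℝ} (hcc : c ≤ c') :
    (ν (halfSp m c)).toReal ≤ (ν (halfSp m c')).toReal :=
  ENNReal.toReal_mono (measure_ne_top ν _) (measure_mono fun y hy => le_trans hy hcc)



section
variable {ν : Measure (EuclideanSpace ℝ (Fin d))} {f : EuclideanSpace ℝ (Fin d) → ℝ}
  [IsProbabilityMeasure ν]

lemma depth_set_eq (x : V) : depthPt ν x =
    sInf {r : ℝ | ∃ (m : EuclideanSpace ℝ (Fin d)) (c : ℝ), m ≠ 0 ∧ (inner ℝ m x : ℝ) ≤ c ∧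
      r = (ν (halfSp m c)).toReal} := rfl

lemma depth_bddBelow (x : V) : BddBelow {r : ℝ | ∃ (m : EuclideanSpace ℝ (Fin d)) (c : ℝ),
    m ≠ 0 ∧ (inner ℝ m x : ℝ) ≤ c ∧ r = (ν (halfSp m c)).toReal} :=
  ⟨0, by rintro r ⟨m, c, _, _, rfl⟩; exact ENNReal.toReal_nonneg⟩

lemma depth_le (x m : V) (hm : m ≠ 0) {c : ℝ} (hc : (inner ℝ m x : ℝ) ≤ c) :
    depthPt ν x ≤ (ν (halfSp m c)).toReal := by
  rw [depth_set_eq]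
  exact csInf_le (depth_bddBelow x) ⟨m, c, hm, hc, rfl⟩

/-- unit vector -/
lemma exists_unit (hd : 0 < d) : ∃ m : EuclideanSpace ℝ (Fin d), ‖m‖ = 1 := by
  refine ⟨EuclideanSpace.single (⟨0, hd⟩ : Fin d) (1:ℝ), ?_⟩
  rw [EuclideanSpace.norm_single]
  norm_num

lemma depth_attained (hf : Continuous f) (hfpos : ∀ x, 0 < f x)
    (hν : ν = volume.withDensity fun x => ENNReal.ofReal (f x)) (hd : 0 < d) (x : V) :
    ∃ m₀ : EuclideanSpace ℝ (Fin d), ‖m₀‖ = 1 ∧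
      depthPt ν x = (ν (halfSp m₀ (inner ℝ m₀ x : ℝ))).toReal ∧
      ∀ m : EuclideanSpace ℝ (Fin d), ‖m‖ = 1 →
        (ν (halfSp m₀ (inner ℝ m₀ x : ℝ))).toReal ≤ (ν (halfSp m (inner ℝ m x : ℝ))).toReal := by
  obtain ⟨munit, hmunit⟩ := exists_unit (d := d) hd
  have hSc : IsCompact (Metric.sphere (0:V) 1) := isCompact_sphere 0 1
  have hSne : (Metric.sphere (0:V) 1).Nonempty :=
    ⟨munit, by rwa [mem_sphere_zero_iff_norm]⟩
  set g : V → ℝ := fun m => ∫ y in halfSp m (inner ℝ m x : ℝ), f y with hg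
  have hgc : ContinuousOn g (Metric.sphere (0:V) 1) := by
    have h2 : Continuous (fun m : V => (m, (inner ℝ m x : ℝ))) :=
      continuous_id.prodMk (Continuous.inner continuous_id continuous_const)
    apply ContinuousOn.comp
      (g := fun p : (EuclideanSpace ℝ (Fin d)) × ℝ => ∫ y in halfSp p.1 p.2, f y)
      (f := fun m : V => (m, (inner ℝ m x : ℝ))) (G_contOn hf hfpos hν) h2.continuousOn
    intro m hm
    have h1 : ‖m‖ = 1 := mem_sphere_zero_iff_norm.mp hm
    simp only [Set.mem_setOf_eq]
    exact fun h0 => by simp [h0] at h1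
  obtain ⟨m₀, hm₀S, hmin⟩ := hSc.exists_isMinOn hSne hgc
  have hm₀ : ‖m₀‖ = 1 := mem_sphere_zero_iff_norm.mp hm₀S
  have hm₀0 : m₀ ≠ 0 := fun h0 => by simp [h0] at hm₀
  have hGg : ∀ m : V, (ν (halfSp m (inner ℝ m x : ℝ))).toReal = g m := fun m =>
    G_eq hf hfpos hν m _
  refine ⟨m₀, hm₀, ?_, ?_⟩
  · rw [depth_set_eq]
    apply le_antisymm
    · exact csInf_le (depth_bddBelow x) ⟨m₀, (inner ℝ m₀ x : ℝ), hm₀0, le_refl _, rfl⟩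
    · have hne2 : {r : ℝ | ∃ (m : EuclideanSpace ℝ (Fin d)) (c : ℝ), m ≠ 0 ∧
          (inner ℝ m x : ℝ) ≤ c ∧ r = (ν (halfSp m c)).toReal}.Nonempty :=
        ⟨(ν (halfSp m₀ (inner ℝ m₀ x : ℝ))).toReal, m₀, (inner ℝ m₀ x : ℝ), hm₀0, le_refl _, rfl⟩
      apply le_csInf hne2
      rintro r ⟨m, c, hm, hmx, rfl⟩
      have hnm : (0:ℝ) < ‖m‖ := norm_pos_iff.mpr hm
      set m' : V := ‖m‖⁻¹ • m with hm'
      have hm'n : ‖m'‖ = 1 := by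
        rw [hm', norm_smul, norm_inv, norm_norm, inv_mul_cancel₀ (ne_of_gt hnm)]
      have hm'S : m' ∈ Metric.sphere (0:V) 1 := mem_sphere_zero_iff_norm.mpr hm'n
      have hsets : halfSp m c = halfSp m' (‖m‖⁻¹ * c) := by
        ext y
        show (inner ℝ m y : ℝ) ≤ c ↔ (inner ℝ m' y : ℝ) ≤ ‖m‖⁻¹ * c
        rw [hm', real_inner_smul_left]
        constructor
        · intro h; exact mul_le_mul_of_nonneg_left h (inv_nonneg.mpr hnm.le)
        · intro h
          have := mul_le_mul_of_nonneg_left h hnm.le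
          rwa [← mul_assoc, ← mul_assoc, mul_inv_cancel₀ (ne_of_gt hnm), one_mul, one_mul] at this
      have hm'x : (inner ℝ m' x : ℝ) ≤ ‖m‖⁻¹ * c := by
        rw [hm', real_inner_smul_left]
        exact mul_le_mul_of_nonneg_left hmx (inv_nonneg.mpr hnm.le)
      calc (ν (halfSp m₀ (inner ℝ m₀ x : ℝ))).toReal
          ≤ (ν (halfSp m' (inner ℝ m' x : ℝ))).toReal := by
            rw [hGg, hGg]; exact hmin hm'S
        _ ≤ (ν (halfSp m' (‖m‖⁻¹ * c))).toReal := G_mono m' hm'x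
        _ = (ν (halfSp m c)).toReal := by rw [hsets]
  · intro m hm1
    rw [hGg, hGg]
    exact hmin (mem_sphere_zero_iff_norm.mpr hm1)

end


lemma exists_better (hf : Continuous f) (hfpos : ∀ x, 0 < f x)
    (hν : ν = volume.withDensity fun x => ENNReal.ofReal (f x)) (hd : 0 < d)
    (x v : V) (α ε : ℝ) (hε : 0 < ε)
    (hα : depthPt ν x = α)
    (hlb : ∀ m : EuclideanSpace ℝ (Fin d), ‖m‖ = 1 →
      α ≤ (ν (halfSp m (inner ℝ m x : ℝ))).toReal)
    (hM : ∀ m : EuclideanSpace ℝ (Fin d), ‖m‖ = 1 →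
      (ν (halfSp m (inner ℝ m x : ℝ))).toReal = α → ε ≤ (inner ℝ m v : ℝ)) :
    ∃ x' : EuclideanSpace ℝ (Fin d), α < depthPt ν x' := by
  set K : Set (EuclideanSpace ℝ (Fin d)) :=
    {m | ‖m‖ = 1 ∧ (inner ℝ m v : ℝ) ≤ ε/2} with hK
  have hKclosed : IsClosed K := by
    rw [hK, Set.setOf_and]
    exact (isClosed_eq continuous_norm continuous_const).inter
      (isClosed_le (Continuous.inner continuous_id continuous_const) continuous_const)
  have hKcpt : IsCompact K :=
    (isCompact_sphere (0:V) 1).of_isClosed_subset hKclosed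
      (fun m hm => mem_sphere_zero_iff_norm.mpr hm.1)
  have hKgt : ∀ m ∈ K, α < (ν (halfSp m (inner ℝ m x : ℝ))).toReal := by
    intro m hm
    rcases lt_or_eq_of_le (hlb m hm.1) with h | h
    · exact h
    · exfalso
      have := hM m hm.1 h.symm
      have h2 : (inner ℝ m v : ℝ) ≤ ε/2 := hm.2
      linarith
  -- Claim A
  have claimA : ∃ t : ℝ, 0 < t ∧ ∀ m ∈ K,
      α < (ν (halfSp m ((inner ℝ m x : ℝ) + t * (inner ℝ m v : ℝ)))).toReal := by
    by_contra hcon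
    push_neg at hcon
    have hstep : ∀ n : ℕ, ∃ m ∈ K,
        (ν (halfSp m ((inner ℝ m x : ℝ) + (1/(n+1) : ℝ) * (inner ℝ m v : ℝ)))).toReal ≤ α := by
      intro n
      obtain ⟨m, hm, hle⟩ := hcon (1/(n+1) : ℝ) (by positivity)
      exact ⟨m, hm, hle⟩
    choose ms hms hmsle using hstep
    obtain ⟨mW, hmWK, φ, hφ, hφto⟩ := hKcpt.tendsto_subseq hms
    have hmWn : ‖mW‖ = 1 := hmWK.1
    have hmW0 : mW ≠ 0 := fun h0 => by simp [h0] at hmWn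
    have ht0 : Tendsto (fun n : ℕ => (1/(φ n+1) : ℝ)) atTop (nhds 0) := by
      have h1 : Tendsto (fun n : ℕ => (1/(n+1) : ℝ)) atTop (nhds 0) :=
        tendsto_one_div_add_atTop_nhds_zero_nat
      exact h1.comp hφ.tendsto_atTop
    have hinto : Tendsto (fun n => (inner ℝ (ms (φ n)) x : ℝ)) atTop (nhds (inner ℝ mW x : ℝ)) :=
      Tendsto.inner hφto tendsto_const_nhds
    have hinvto : Tendsto (fun n => (inner ℝ (ms (φ n)) v : ℝ)) atTop (nhds (inner ℝ mW v : ℝ)) :=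
      Tendsto.inner hφto tendsto_const_nhds
    have hcto : Tendsto (fun n => (inner ℝ (ms (φ n)) x : ℝ) + (1/(φ n+1) : ℝ) * (inner ℝ (ms (φ n)) v : ℝ))
        atTop (nhds (inner ℝ mW x : ℝ)) := by
      have := hinto.add (ht0.mul hinvto)
      simpa using this
    have hGto := G_tendsto hf hfpos hν hmW0 hφto hcto
    have hle : (∫ y in halfSp mW (inner ℝ mW x : ℝ), f y) ≤ α := by
      apply le_of_tendsto hGto
      filter_upwards with n
      rw [← G_eq hf hfpos hν]
      exact hmsle (φ n)
    rw [← G_eq hf hfpos hν] at hle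
    exact absurd hle (not_le.mpr (hKgt mW hmWK))
  obtain ⟨t, ht, htK⟩ := claimA
  refine ⟨x + t • v, ?_⟩
  obtain ⟨m₁, hm₁n, hm₁eq, _⟩ := depth_attained hf hfpos hν hd (x + t • v)
  have hm₁0 : m₁ ≠ 0 := fun h0 => by simp [h0] at hm₁n
  have hxv : (inner ℝ m₁ (x + t • v) : ℝ) = (inner ℝ m₁ x : ℝ) + t * (inner ℝ m₁ v : ℝ) := by
    rw [inner_add_right, real_inner_smul_right]
  rw [hm₁eq, hxv]
  by_cases hm₁K : m₁ ∈ K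
  · exact htK m₁ hm₁K
  · have hm₁v : ε/2 < (inner ℝ m₁ v : ℝ) := by
      by_contra hcon
      exact hm₁K ⟨hm₁n, not_lt.mp hcon⟩
    calc α ≤ (ν (halfSp m₁ (inner ℝ m₁ x : ℝ))).toReal := hlb m₁ hm₁n
    _ < (ν (halfSp m₁ ((inner ℝ m₁ x : ℝ) + t * (ε/2)))).toReal :=
        G_strictMono hf hfpos hν hm₁0 (by nlinarith)
    _ ≤ (ν (halfSp m₁ ((inner ℝ m₁ x : ℝ) + t * (inner ℝ m₁ v : ℝ)))).toReal :=
        G_mono m₁ (by nlinarith)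

end


lemma isCompact_convexHull_fd {E : Type*} [NormedAddCommGroup E] [NormedSpace ℝ E]
    [FiniteDimensional ℝ E] {s : Set E} (hs : IsCompact s) (hne : s.Nonempty) :
    IsCompact (convexHull ℝ s) := by
  classical
  obtain ⟨mbar, hmbar⟩ := hne
  set n := Module.finrank ℝ E + 1 with hn
  set K : Set ((Fin n → ℝ) × (Fin n → E)) :=
    (stdSimplex ℝ (Fin n)) ×ˢ (Set.univ.pi fun _ => s) with hK
  have hKc : IsCompact K := (isCompact_stdSimplex _ _).prod (isCompact_univ_pi fun _ => hs)
  set φ : (Fin n → ℝ) × (Fin n → E) → E := fun p => ∑ i, p.1 i • p.2 i with hφ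
  have hφc : Continuous φ := by
    apply continuous_finset_sum
    intro i _
    exact ((continuous_apply i).comp continuous_fst).smul ((continuous_apply i).comp continuous_snd)
  have himg : convexHull ℝ s = φ '' K := by
    apply Set.Subset.antisymm
    · intro x hx
      obtain ⟨ι, hfin, z, w, hrange, hindep, hpos, hsum, hcomb⟩ :=
        eq_pos_convex_span_of_mem_convexHull hx
      have hcard : Fintype.card ι ≤ n := by
        calc Fintype.card ι ≤ Module.finrank ℝ (vectorSpan ℝ (Set.range z)) + 1 :=
              hindep.card_le_finrank_succ
        _ ≤ n := by
              have := Submodule.finrank_le (vectorSpan ℝ (Set.range z))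
              omega
      obtain ⟨e⟩ : Nonempty (ι ↪ Fin n) := Function.Embedding.nonempty_of_card_le
        (by simpa using hcard)
      set w' : Fin n → ℝ := Function.extend e w 0 with hw'
      set z' : Fin n → E := Function.extend e z (fun _ => mbar) with hz'
      have hwe : ∀ i, w' (e i) = w i := fun i => e.injective.extend_apply w 0 i
      have hze : ∀ i, z' (e i) = z i := fun i => e.injective.extend_apply z _ i
      have hw0 : ∀ j, j ∉ Finset.univ.map e → w' j = 0 := by
        intro j hj
        rw [hw', Function.extend_apply' _ _ _ (by
          rintro ⟨i, rfl⟩; exact hj (Finset.mem_map_of_mem e (Finset.mem_univ i)))]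
        rfl
      have key : ∀ (F : Fin n → ℝ → E → E), True := fun _ => trivial
      refine ⟨⟨w', z'⟩, ⟨?_, ?_⟩, ?_⟩
      · constructor
        · intro j
          show 0 ≤ w' j
          by_cases hj : j ∈ Finset.univ.map e
          · obtain ⟨i, _, rfl⟩ := Finset.mem_map.mp hj
            rw [hwe]; exact (hpos i).le
          · rw [hw0 j hj]
        · rw [← Finset.sum_subset (Finset.subset_univ (Finset.univ.map e))
            (fun j _ hj => hw0 j hj), Finset.sum_map]
          simpa [hwe] using hsum
      · intro j _
        show z' j ∈ s
        by_cases hj : ∃ i, e i = j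
        · obtain ⟨i, rfl⟩ := hj
          rw [hze]; exact hrange (Set.mem_range_self i)
        · rw [hz', Function.extend_apply' _ _ _ hj]; exact hmbar
      · show ∑ j, w' j • z' j = x
        rw [← Finset.sum_subset (Finset.subset_univ (Finset.univ.map e))
          (fun j _ hj => by rw [hw0 j hj, zero_smul]), Finset.sum_map]
        simp only [Function.Embedding.coeFn_mk, hwe, hze]
        exact hcomb
    · rintro _ ⟨⟨w, z⟩, ⟨⟨hw0, hw1⟩, hz⟩, rfl⟩
      exact mem_convexHull_of_exists_fintype w z hw0 hw1
        (fun i => hz i (Set.mem_univ i)) rfl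
  rw [himg]
  exact hKc.image hφc

theorem stmt7 (d : ℕ) (a : ℝ) (ha : 1 / (d + 1) < a) (ha' : a < 1 / d)
    (ν : Measure (EuclideanSpace ℝ (Fin d))) [IsProbabilityMeasure ν]
    (f : EuclideanSpace ℝ (Fin d) → ℝ)
    (hf : Continuous f) (hfpos : ∀ x, 0 < f x)
    (hfdecay : ∃ C₁ C₂ : ℝ, 0 < C₁ ∧ 0 < C₂ ∧ ∀ x, f x < C₁ * Real.exp (-C₂ * ‖x‖))
    (hν : ν = volume.withDensity (fun x => ENNReal.ofReal (f x)))
    (hsup : (⨆ x, depthPt ν x) < a)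
    (o o' : EuclideanSpace ℝ (Fin d))
    (hmed : ∀ x, depthPt ν x ≤ depthPt ν o)
    (hmed' : ∀ x, depthPt ν x ≤ depthPt ν o') :
    o = o' := by
  by_contra hne
  rcases Nat.eq_zero_or_pos d with hd0 | hd
  · subst hd0
    simp at ha ha'
    linarith
  obtain ⟨munit, hmunit⟩ := exists_unit (d := d) hd
  have hmunit0 : munit ≠ 0 := fun h0 => by simp [h0] at hmunit
  set α := depthPt ν o with hα
  have hdo' : depthPt ν o' = α := le_antisymm (hmed o') (hmed' o)
  have hbdd : BddAbove (Set.range fun x => depthPt ν x) :=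
    ⟨α, by rintro r ⟨x, rfl⟩; exact hmed x⟩
  have hαa : α < a := lt_of_le_of_lt (le_ciSup hbdd o) hsup
  set u : EuclideanSpace ℝ (Fin d) := o' - o with hu
  have hu0 : u ≠ 0 := sub_ne_zero.mpr (Ne.symm hne)
  set x : EuclideanSpace ℝ (Fin d) := ((1:ℝ)/2) • (o + o') with hx
  have hxin : ∀ m : EuclideanSpace ℝ (Fin d),
      (inner ℝ m x : ℝ) = ((inner ℝ m o : ℝ) + (inner ℝ m o' : ℝ))/2 := by
    intro m
    rw [hx, real_inner_smul_right, inner_add_right]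
    ring
  have hα0 : 0 ≤ α := by
    rw [hα, depth_set_eq]
    have hne3 : {r : ℝ | ∃ (m : EuclideanSpace ℝ (Fin d)) (c : ℝ), m ≠ 0 ∧
        (inner ℝ m o : ℝ) ≤ c ∧ r = (ν (halfSp m c)).toReal}.Nonempty :=
      ⟨(ν (halfSp munit (inner ℝ munit o : ℝ))).toReal, munit, (inner ℝ munit o : ℝ),
        hmunit0, le_refl _, rfl⟩
    apply le_csInf hne3
    rintro r ⟨m, c, hm, hmx, rfl⟩
    exact ENNReal.toReal_nonneg
  have hdx : depthPt ν x = α := by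
    apply le_antisymm (hmed x)
    rw [depth_set_eq]
    have hne3 : {r : ℝ | ∃ (m : EuclideanSpace ℝ (Fin d)) (c : ℝ), m ≠ 0 ∧
        (inner ℝ m x : ℝ) ≤ c ∧ r = (ν (halfSp m c)).toReal}.Nonempty :=
      ⟨(ν (halfSp munit (inner ℝ munit x : ℝ))).toReal, munit, (inner ℝ munit x : ℝ),
        hmunit0, le_refl _, rfl⟩
    apply le_csInf hne3
    rintro r ⟨m, c, hm, hmx, rfl⟩
    rcases le_or_gt (inner ℝ m o : ℝ) c with h | h
    · exact depth_le o m hm h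
    · have h' : (inner ℝ m o' : ℝ) ≤ c := by
        rw [hxin m] at hmx
        linarith
      rw [← hdo']
      exact depth_le o' m hm h'
  have hlb : ∀ m : EuclideanSpace ℝ (Fin d), ‖m‖ = 1 →
      α ≤ (ν (halfSp m (inner ℝ m x : ℝ))).toReal := by
    intro m hm1
    have hm0 : m ≠ 0 := fun h0 => by simp [h0] at hm1
    rw [← hdx]
    exact depth_le x m hm0 (le_refl _)
  have horth : ∀ m : EuclideanSpace ℝ (Fin d), ‖m‖ = 1 →
      (ν (halfSp m (inner ℝ m x : ℝ))).toReal = α → (inner ℝ m u : ℝ) = 0 := by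
    intro m hm1 hGm
    have hm0 : m ≠ 0 := fun h0 => by simp [h0] at hm1
    have ho : (inner ℝ m x : ℝ) ≤ (inner ℝ m o : ℝ) := by
      by_contra hcon
      push_neg at hcon
      have h1 : depthPt ν o ≤ (ν (halfSp m (inner ℝ m o : ℝ))).toReal :=
        depth_le o m hm0 (le_refl _)
      have h2 : (ν (halfSp m (inner ℝ m o : ℝ))).toReal
          < (ν (halfSp m (inner ℝ m x : ℝ))).toReal := G_strictMono hf hfpos hν hm0 hcon
      rw [hGm] at h2
      rw [← hα] at h1
      linarith
    have ho' : (inner ℝ m x : ℝ) ≤ (inner ℝ m o' : ℝ) := by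
      by_contra hcon
      push_neg at hcon
      have h1 : depthPt ν o' ≤ (ν (halfSp m (inner ℝ m o' : ℝ))).toReal :=
        depth_le o' m hm0 (le_refl _)
      have h2 : (ν (halfSp m (inner ℝ m o' : ℝ))).toReal
          < (ν (halfSp m (inner ℝ m x : ℝ))).toReal := G_strictMono hf hfpos hν hm0 hcon
      rw [hGm] at h2
      rw [hdo'] at h1
      linarith
    have hiu : (inner ℝ m u : ℝ) = (inner ℝ m o' : ℝ) - (inner ℝ m o : ℝ) := by
      rw [hu, inner_sub_right]
    rw [hxin m] at ho ho'
    linarith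
  set M : Set (EuclideanSpace ℝ (Fin d)) :=
    {m | ‖m‖ = 1 ∧ (ν (halfSp m (inner ℝ m x : ℝ))).toReal = α} with hM
  have hMne : M.Nonempty := by
    obtain ⟨m₀, h1, h2, _⟩ := depth_attained hf hfpos hν hd x
    exact ⟨m₀, h1, by rw [← h2, hdx]⟩
  have hMclosed : IsClosed M := by
    apply IsSeqClosed.isClosed
    intro mseq m hmem hto
    have hn1 : ‖m‖ = 1 := by
      have h2 : Filter.Tendsto (fun n => ‖mseq n‖) Filter.atTop (nhds ‖m‖) := hto.norm
      have h3 : (fun n => ‖mseq n‖) = fun _ => (1:ℝ) := funext fun n => (hmem n).1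
      rw [h3] at h2
      exact (tendsto_nhds_unique h2 tendsto_const_nhds)
    have hm0 : m ≠ 0 := fun h0 => by simp [h0] at hn1
    refine ⟨hn1, ?_⟩
    have hcto : Filter.Tendsto (fun n => (inner ℝ (mseq n) x : ℝ)) Filter.atTop
        (nhds (inner ℝ m x : ℝ)) := Tendsto.inner hto tendsto_const_nhds
    have hGto := G_tendsto hf hfpos hν hm0 hto hcto
    have h4 : (fun n => ∫ y in halfSp (mseq n) (inner ℝ (mseq n) x : ℝ), f y) = fun _ => α :=
      funext fun n => by rw [← G_eq hf hfpos hν]; exact (hmem n).2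
    rw [h4] at hGto
    rw [G_eq hf hfpos hν]
    exact tendsto_nhds_unique hGto tendsto_const_nhds
  have hMcpt : IsCompact M :=
    (isCompact_sphere (0 : EuclideanSpace ℝ (Fin d)) 1).of_isClosed_subset hMclosed
      (fun m hm => mem_sphere_zero_iff_norm.mpr hm.1)
  have hMorth : ∀ m ∈ M, (inner ℝ m u : ℝ) = 0 := fun m hm => horth m hm.1 hm.2
  by_cases h0M : (0 : EuclideanSpace ℝ (Fin d)) ∈ convexHull ℝ M
  · obtain ⟨ι, hfin, z, w, hrange, hindep, hposw, hsum1, hcomb⟩ :=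
      eq_pos_convex_span_of_mem_convexHull h0M
    have hspan : vectorSpan ℝ (Set.range z) ≤ (ℝ ∙ u)ᗮ := by
      rw [vectorSpan_def]
      apply Submodule.span_le.2
      rintro w' ⟨p, hp, q, hq, rfl⟩
      have hp' : p ∈ M := hrange hp
      have hq' : q ∈ M := hrange hq
      apply SetLike.mem_coe.mpr
      apply Submodule.mem_orthogonal_singleton_iff_inner_left.mpr
      show (inner ℝ (p - q) u : ℝ) = 0
      rw [inner_sub_left, hMorth p hp', hMorth q hq']
      ring
    have hlttop : (ℝ ∙ u)ᗮ < ⊤ := by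
      rw [lt_top_iff_ne_top]
      intro htop
      have h5 : u ∈ (ℝ ∙ u)ᗮ := htop ▸ Submodule.mem_top
      have h6 := Submodule.mem_orthogonal_singleton_iff_inner_left.mp h5
      exact hu0 (inner_self_eq_zero.mp h6)
    have hfr : Module.finrank ℝ ((ℝ ∙ u)ᗮ) < d := by
      have h7 := Submodule.finrank_lt hlttop.ne
      rwa [finrank_euclideanSpace_fin] at h7
    have hcard : Fintype.card ι ≤ d := by
      have h1 := hindep.card_le_finrank_succ
      have h2 : Module.finrank ℝ (vectorSpan ℝ (Set.range z))
          ≤ Module.finrank ℝ ((ℝ ∙ u)ᗮ) := Submodule.finrank_mono hspan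
      omega
    have hι : Nonempty ι := by
      by_contra hemp
      rw [not_nonempty_iff] at hemp
      rw [Finset.univ_eq_empty, Finset.sum_empty] at hsum1
      norm_num at hsum1
    have hcover : (Set.univ : Set (EuclideanSpace ℝ (Fin d)))
        ⊆ ⋃ i, halfSp (z i) (inner ℝ (z i) x : ℝ) := by
      intro y _
      rw [Set.mem_iUnion]
      by_contra hcon
      push_neg at hcon
      have hpos' : ∀ i, 0 < w i * ((inner ℝ (z i) y : ℝ) - (inner ℝ (z i) x : ℝ)) := by
        intro i
        have h5 : ¬ ((inner ℝ (z i) y : ℝ) ≤ (inner ℝ (z i) x : ℝ)) := hcon i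
        push_neg at h5
        exact mul_pos (hposw i) (by linarith)
      have hzero : ∑ i, w i * ((inner ℝ (z i) y : ℝ) - (inner ℝ (z i) x : ℝ)) = 0 := by
        have h6 : (inner ℝ (∑ i, w i • z i) (y - x) : ℝ) = 0 := by
          rw [hcomb, inner_zero_left]
        rw [sum_inner] at h6
        rw [← h6]
        apply Finset.sum_congr rfl
        intro i _
        rw [real_inner_smul_left, inner_sub_right]
      have h8 := Finset.sum_pos (fun i _ => hpos' i) Finset.univ_nonempty
      linarith
    have hval : ∀ i, (ν (halfSp (z i) (inner ℝ (z i) x : ℝ))).toReal = α :=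
      fun i => (hrange (Set.mem_range_self i)).2
    have hsum : (1:ℝ) ≤ ∑ i, (ν (halfSp (z i) (inner ℝ (z i) x : ℝ))).toReal := by
      have h7 : ν Set.univ ≤ ∑ i, ν (halfSp (z i) (inner ℝ (z i) x : ℝ)) :=
        le_trans (measure_mono hcover) (measure_iUnion_fintype_le ν _)
      have h8 : ∑ i, ν (halfSp (z i) (inner ℝ (z i) x : ℝ)) ≠ ⊤ := by
        rw [← lt_top_iff_ne_top]
        exact ENNReal.sum_lt_top.mpr fun i _ => measure_lt_top ν _
      have h9 := ENNReal.toReal_mono h8 h7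
      rw [measure_univ, ENNReal.toReal_one] at h9
      rwa [ENNReal.toReal_sum (fun i _ => measure_ne_top ν _)] at h9
    have hsum2 : ∑ i, (ν (halfSp (z i) (inner ℝ (z i) x : ℝ))).toReal
        = (Fintype.card ι : ℝ) * α := by
      rw [Finset.sum_congr rfl fun i _ => hval i, Finset.sum_const, Finset.card_univ,
        nsmul_eq_mul]
    rw [hsum2] at hsum
    have hd' : (0:ℝ) < (d:ℝ) := Nat.cast_pos.mpr hd
    have hda : (d:ℝ) * a < 1 := by
      rw [lt_div_iff₀ hd'] at ha'
      linarith
    have hcard' : (Fintype.card ι : ℝ) ≤ (d:ℝ) := Nat.cast_le.mpr hcard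
    have hc1 : (Fintype.card ι : ℝ) * α ≤ (d:ℝ) * α :=
      mul_le_mul_of_nonneg_right hcard' hα0
    have hc2 : (d:ℝ) * α < (d:ℝ) * a := mul_lt_mul_of_pos_left hαa hd'
    linarith
  · have hconvcpt : IsCompact (convexHull ℝ M) := isCompact_convexHull_fd hMcpt hMne
    obtain ⟨l, s, hl, hs0⟩ := geometric_hahn_banach_closed_point
      (convex_convexHull ℝ M) hconvcpt.isClosed h0M
    rw [map_zero] at hs0
    set v : EuclideanSpace ℝ (Fin d) :=
      -((InnerProductSpace.toDual ℝ (EuclideanSpace ℝ (Fin d))).symm l) with hv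
    have hMv : ∀ m ∈ M, (-s) ≤ (inner ℝ m v : ℝ) := by
      intro m hm
      have h1 : l m < s := hl m (subset_convexHull ℝ M hm)
      have h2 : (inner ℝ ((InnerProductSpace.toDual ℝ (EuclideanSpace ℝ (Fin d))).symm l) m : ℝ)
          = l m := InnerProductSpace.toDual_symm_apply
      have h3 : (inner ℝ m v : ℝ) = - l m := by
        rw [hv, real_inner_comm, inner_neg_left, h2]
      linarith
    obtain ⟨x', hx'⟩ := exists_better hf hfpos hν hd x v α (-s) (by linarith) hdx hlb
      (fun m hm1 hGm => hMv m ⟨hm1, hGm⟩)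
    have := hmed x'
    linarith
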